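/- Let a_1, …, a_n ∈ ℝ^d, b ∈ ℝ^n, z ∈ ℝ^d, and assume (LP) is not unbounded (i.e. either P = {x : ⟨a_i,x⟩ ≤ b_i ∀i} is empty or ⟨z,·⟩ is bounded above on P). Then there exists λ₀ ∈ ℝ such that for every λ < λ₀: (1) for every c ∈ ℝ, c is an upper bound of (x,t) ↦ ⟨z,x⟩ + λt on Q = {(x,t) : 0 ≤ t ≤ 1, ⟨a_i,x⟩ ≤ t b_i + (1−t) ∀i} if and only if c is an upper bound of ⟨z,·⟩ on P₀ = {x : ⟨a_i,x⟩ ≤ 1 ∀i}; and (2) every (x,t) ∈ Q maximizing ⟨z,x⟩ + λt over Q satisfies t = 0, and its component x maximizes ⟨z,·⟩ over P₀. -/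
import Mathlib


open RealInnerProductSpace

/-- Interpolation, small `λ`: if (LP) is not unbounded, then for all sufficiently small `λ`,
(1) the objective of (Int LP) has the same upper bounds on `Q` as the objective of (Unit LP)
has on `P₀`, and (2) every maximizer `(x, t)` of (Int LP) satisfies `t = 0` and its component
`x` maximizes the objective of (Unit LP) over `P₀`. -/
theorem interpolation_small_lambda (d n : ℕ)
    (a : Fin n → EuclideanSpace ℝ (Fin d)) (b : Fin n → ℝ) (z : EuclideanSpace ℝ (Fin d))
    (hnotunb : (∀ x : EuclideanSpace ℝ (Fin d), ¬ ∀ i, ⟪a i, x⟫ ≤ b i) ∨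
      (∃ c : ℝ, ∀ x : EuclideanSpace ℝ (Fin d), (∀ i, ⟪a i, x⟫ ≤ b i) → ⟪z, x⟫ ≤ c)) :
    ∃ lam₀ : ℝ, ∀ lam : ℝ, lam < lam₀ →
      ((∀ c : ℝ,
        (∀ (x : EuclideanSpace ℝ (Fin d)) (t : ℝ), 0 ≤ t → t ≤ 1 →
            (∀ i, ⟪a i, x⟫ ≤ t * b i + (1 - t)) → ⟪z, x⟫ + lam * t ≤ c) ↔
          (∀ x : EuclideanSpace ℝ (Fin d), (∀ i, ⟪a i, x⟫ ≤ 1) → ⟪z, x⟫ ≤ c)) ∧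
       (∀ (x : EuclideanSpace ℝ (Fin d)) (t : ℝ), 0 ≤ t → t ≤ 1 →
          (∀ i, ⟪a i, x⟫ ≤ t * b i + (1 - t)) →
          (∀ (y : EuclideanSpace ℝ (Fin d)) (s : ℝ), 0 ≤ s → s ≤ 1 →
            (∀ i, ⟪a i, y⟫ ≤ s * b i + (1 - s)) → ⟪z, y⟫ + lam * s ≤ ⟪z, x⟫ + lam * t) →
          t = 0 ∧ ∀ y : EuclideanSpace ℝ (Fin d), (∀ i, ⟪a i, y⟫ ≤ 1) → ⟪z, y⟫ ≤ ⟪z, x⟫)) := by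
  by_cases hbdd : ∃ c : ℝ, ∀ x : EuclideanSpace ℝ (Fin d), (∀ i, ⟪a i, x⟫ ≤ 1) → ⟪z, x⟫ ≤ c
  · -- Unit LP bounded case
    obtain ⟨c₀, hc₀⟩ := hbdd
    set B : ℝ := ∑ i, |b i - 1| with hB
    have hB0 : 0 ≤ B := Finset.sum_nonneg fun i _ => abs_nonneg _
    have hBi : ∀ i, b i - 1 ≤ B := fun i =>
      le_trans (le_abs_self _)
        (Finset.single_le_sum (f := fun i => |b i - 1|) (fun j _ => abs_nonneg _)
          (Finset.mem_univ i))
    set S : Set ℝ := (fun x : EuclideanSpace ℝ (Fin d) => ⟪z, x⟫) '' {x | ∀ i, ⟪a i, x⟫ ≤ 1}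
      with hSdef
    have hS0 : (0 : ℝ) ∈ S := ⟨0, fun i => by simp [inner_zero_right], by simp⟩
    have hSbdd : BddAbove S := ⟨c₀, by rintro r ⟨x, hx, rfl⟩; exact hc₀ x hx⟩
    set M : ℝ := sSup S with hM
    have hM0 : 0 ≤ M := le_csSup hSbdd hS0
    have key : ∀ (x : EuclideanSpace ℝ (Fin d)) (t : ℝ), 0 ≤ t →
        (∀ i, ⟪a i, x⟫ ≤ t * b i + (1 - t)) → ⟪z, x⟫ ≤ (1 + t * B) * M := by
      intro x t ht hx
      have htB : 0 ≤ t * B := mul_nonneg ht hB0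
      have hpos : 0 < 1 + t * B := by linarith
      have hx' : ∀ i, ⟪a i, ((1 + t * B)⁻¹ • x : EuclideanSpace ℝ (Fin d))⟫ ≤ 1 := by
        intro i
        rw [real_inner_smul_right, inv_mul_le_iff₀ hpos, mul_one]
        have h1 := hx i
        have h2 := hBi i
        nlinarith
      have hmem : ⟪z, ((1 + t * B)⁻¹ • x : EuclideanSpace ℝ (Fin d))⟫ ≤ M :=
        le_csSup hSbdd ⟨_, hx', rfl⟩
      rw [real_inner_smul_right] at hmem
      calc ⟪z, x⟫ = (1 + t * B) * ((1 + t * B)⁻¹ * ⟪z, x⟫) := by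
            field_simp
        _ ≤ (1 + t * B) * M := mul_le_mul_of_nonneg_left hmem hpos.le
    refine ⟨-(B * M), fun lam hlam => ⟨fun c => ⟨?_, ?_⟩, ?_⟩⟩
    · -- upper bound on Q → upper bound on P₀
      intro h x hx
      have := h x 0 le_rfl zero_le_one (fun i => by simpa using hx i)
      simpa using this
    · -- upper bound on P₀ → upper bound on Q
      intro h x t ht ht1 hx
      have hMc : M ≤ c := csSup_le ⟨0, hS0⟩ (by rintro r ⟨y, hy, rfl⟩; exact h y hy)
      have hk := key x t ht hx
      have hlt : t * lam ≤ t * (-(B * M)) := mul_le_mul_of_nonneg_left hlam.le ht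
      nlinarith
    · -- maximizers
      intro x t ht ht1 hx hmax
      have hMle : M ≤ ⟪z, x⟫ + lam * t := by
        refine csSup_le ⟨0, hS0⟩ ?_
        rintro r ⟨y, hy, rfl⟩
        have := hmax y 0 le_rfl zero_le_one (fun i => by simpa using hy i)
        simpa using this
      have hk := key x t ht hx
      have ht0 : t = 0 := by
        refine le_antisymm ?_ ht
        by_contra hcon
        push_neg at hcon
        have hlt : t * lam < t * (-(B * M)) := mul_lt_mul_of_pos_left hlam hcon
        nlinarith
      refine ⟨ht0, fun y hy => ?_⟩
      have := hmax y 0 le_rfl zero_le_one (fun i => by simpa using hy i)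
      rw [ht0] at this
      simpa using this
  · -- Unit LP unbounded case: everything degenerate
    push_neg at hbdd
    refine ⟨0, fun lam _ => ⟨fun c => ⟨?_, ?_⟩, ?_⟩⟩
    · intro h x hx
      have := h x 0 le_rfl zero_le_one (fun i => by simpa using hx i)
      simpa using this
    · intro h
      obtain ⟨x, hx, hcx⟩ := hbdd c
      exact absurd (h x hx) (not_le.2 hcx)
    · intro x t ht ht1 hx hmax
      exfalso
      obtain ⟨y, hy, hcy⟩ := hbdd (⟪z, x⟫ + lam * t)
      have := hmax y 0 le_rfl zero_le_one (fun i => by simpa using hy i)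
      simp only [mul_zero, add_zero] at this
      linarith
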